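/- Let T ⊂ ℝⁿ be a set whose diameter is at most 1. Then for every point x in the convex hull of T and every positive integer s, there exist points x₁, …, x_s ∈ T (not necessarily distinct) such that ‖x − (1/s) ∑_{i=1}^s x_i‖₂ ≤ 1/√s. -/

import Mathlib

noncomputable def l2 {ι : Type*} [Fintype ι] (v : ι → ℝ) : ℝ :=
  Real.sqrt (∑ j, (v j)^2)

lemma l2_eq_norm {n : ℕ} (v : Fin n → ℝ) :
    l2 v = ‖(WithLp.toLp 2 v : EuclideanSpace ℝ (Fin n))‖ := by
  rw [EuclideanSpace.norm_eq]
  simp [l2, sq_abs]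

lemma l2_sum_smul_le {n : ℕ} {κ : Type} [Fintype κ] (w : κ → ℝ) (u : κ → (Fin n → ℝ))
    (hw : ∀ k, 0 ≤ w k) (hu : ∀ k, l2 (u k) ≤ 1) :
    l2 (∑ k, w k • u k) ≤ ∑ k, w k := by
  rw [l2_eq_norm]
  have : (WithLp.toLp 2 (∑ k, w k • u k) : EuclideanSpace ℝ (Fin n))
      = ∑ k, w k • (WithLp.toLp 2 (u k) : EuclideanSpace ℝ (Fin n)) := by
    simp only [WithLp.toLp_sum, WithLp.toLp_smul]
  rw [this]
  calc ‖∑ k, w k • (WithLp.toLp 2 (u k) : EuclideanSpace ℝ (Fin n))‖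
      ≤ ∑ k, ‖w k • (WithLp.toLp 2 (u k) : EuclideanSpace ℝ (Fin n))‖ := norm_sum_le _ _
    _ ≤ ∑ k, w k := by
        refine Finset.sum_le_sum fun k _ => ?_
        rw [norm_smul, Real.norm_eq_abs, abs_of_nonneg (hw k)]
        have := hu k
        rw [l2_eq_norm] at this
        calc w k * ‖(WithLp.toLp 2 (u k) : EuclideanSpace ℝ (Fin n))‖ ≤ w k * 1 :=
              mul_le_mul_of_nonneg_left this (hw k)
          _ = w k := mul_one _

/-- Approximate Carathéodory (Maurey's empirical method). -/
theorem approx_caratheodory {n : ℕ} (T : Set (Fin n → ℝ))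
    (hdiam : ∀ y ∈ T, ∀ z ∈ T, l2 (y - z) ≤ 1)
    (x : Fin n → ℝ) (hx : x ∈ convexHull ℝ T) (s : ℕ) (hs : 0 < s) :
    ∃ p : Fin s → (Fin n → ℝ), (∀ i, p i ∈ T) ∧
      l2 (x - (s : ℝ)⁻¹ • ∑ i, p i) ≤ 1 / Real.sqrt s := by
  classical
  obtain ⟨κ, _, w, z, hw0, hw1, hzT, hx'⟩ := mem_convexHull_iff_exists_fintype.mp hx
  have hsR : (0 : ℝ) < (s : ℝ) := by exact_mod_cast hs
  -- the centered vectors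
  set v : κ → (Fin n → ℝ) := fun k => x - z k with hv
  have hxc : ∀ c, ∑ k : κ, w k * z k c = x c := by
    intro c
    have := congrFun hx' c
    simpa using this
  have hv0 : ∀ c, ∑ k : κ, w k * v k c = 0 := by
    intro c
    simp only [hv, Pi.sub_apply, mul_sub]
    rw [Finset.sum_sub_distrib, ← Finset.sum_mul, hw1, hxc c]
    ring
  -- each centered vector has norm ≤ 1
  have hvl2 : ∀ k, l2 (v k) ≤ 1 := by
    intro j
    have hrepr : v j = ∑ k, w k • (z k - z j) := by
      have : ∑ k, w k • (z k - z j) = (∑ k, w k • z k) - (∑ k, w k) • z j := by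
        simp [smul_sub, Finset.sum_sub_distrib, Finset.sum_smul]
      rw [this, hx', hw1, one_smul]
    rw [hrepr]
    calc l2 (∑ k, w k • (z k - z j))
        ≤ ∑ k, w k := l2_sum_smul_le w _ hw0 (fun k => hdiam _ (hzT k) _ (hzT j))
      _ = 1 := hw1
  have hvsq : ∀ j, ∑ c, (v j c)^2 ≤ 1 := by
    intro j
    have h1 : Real.sqrt (∑ c, (v j c)^2) ≤ 1 := hvl2 j
    have h0 : (0:ℝ) ≤ ∑ c, (v j c)^2 := Finset.sum_nonneg fun c _ => sq_nonneg _
    nlinarith [Real.sq_sqrt h0, Real.sqrt_nonneg (∑ c, (v j c)^2)]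
  -- the sample space
  set W : (Fin s → κ) → ℝ := fun f => ∏ i, w (f i) with hW
  have hW0 : ∀ f, 0 ≤ W f := fun f => Finset.prod_nonneg fun i _ => hw0 (f i)
  have hWsum : ∑ f : Fin s → κ, W f = 1 := by
    rw [hW]
    have key := Finset.sum_prod_piFinset (Finset.univ : Finset κ)
      (fun _ : Fin s => fun j : κ => w j)
    rw [Fintype.piFinset_univ] at key
    rw [key]
    simp [hw1]
  -- the squared error
  set q : (Fin s → κ) → ℝ := fun f => ∑ c, (x c - (s:ℝ)⁻¹ * ∑ i, z (f i) c)^2 with hq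
  -- second moment computation
  have hB : ∀ (c : Fin n) (i i' : Fin s),
      ∑ f : Fin s → κ, W f * (v (f i) c * v (f i') c)
        = if i = i' then ∑ j : κ, w j * (v j c)^2 else 0 := by
    intro c i i'
    have hterm : ∀ f : Fin s → κ, W f * (v (f i) c * v (f i') c)
        = ∏ k, (w (f k) * ((if k = i then v (f k) c else 1) * (if k = i' then v (f k) c else 1))) := by
      intro f
      rw [Finset.prod_mul_distrib, Finset.prod_mul_distrib]
      simp [hW]
    simp_rw [hterm]
    have key := Finset.sum_prod_piFinset (Finset.univ : Finset κ)
      (fun k j => w j * ((if k = i then v j c else 1) * if k = i' then v j c else 1))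
    rw [Fintype.piFinset_univ] at key
    rw [key]
    by_cases hii : i = i'
    · subst hii
      rw [if_pos rfl]
      rw [Finset.prod_eq_single i]
      · simp [sq]
      · intro k _ hk
        simp [hk, hw1]
      · simp
    · rw [if_neg hii]
      apply Finset.prod_eq_zero (Finset.mem_univ i)
      simp only [if_pos rfl, if_neg hii, mul_one]
      simpa [mul_comm] using hv0 c
  -- rewrite the squared error as a double sum
  have hqf : ∀ f : Fin s → κ,
      q f = ∑ c, ∑ i, ∑ i', ((s:ℝ)⁻¹)^2 * (v (f i) c * v (f i') c) := by
    intro f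
    rw [hq]
    refine Finset.sum_congr rfl fun c _ => ?_
    have h1 : x c - (s:ℝ)⁻¹ * ∑ i, z (f i) c = (s:ℝ)⁻¹ * ∑ i : Fin s, v (f i) c := by
      simp only [hv, Pi.sub_apply]
      rw [Finset.sum_sub_distrib, Finset.sum_const, Finset.card_univ, Fintype.card_fin,
        nsmul_eq_mul]
      field_simp
    rw [h1, mul_pow, sq (∑ i : Fin s, v (f i) c), Finset.sum_mul_sum, Finset.mul_sum]
    refine Finset.sum_congr rfl fun i _ => ?_
    rw [Finset.mul_sum]
  -- the expected squared error is at most 1/s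
  have hSigma : ∑ f : Fin s → κ, W f * q f ≤ (s:ℝ)⁻¹ := by
    have e1 : ∑ f : Fin s → κ, W f * q f
        = ∑ c, ∑ i, ∑ i', ((s:ℝ)⁻¹)^2 *
            ∑ f : Fin s → κ, W f * (v (f i) c * v (f i') c) := by
      simp_rw [hqf, Finset.mul_sum]
      rw [Finset.sum_comm]
      refine Finset.sum_congr rfl fun c _ => ?_
      rw [Finset.sum_comm]
      refine Finset.sum_congr rfl fun i _ => ?_
      rw [Finset.sum_comm]
      refine Finset.sum_congr rfl fun i' _ => ?_
      refine Finset.sum_congr rfl fun f _ => ?_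
      ring
    rw [e1]
    simp_rw [hB]
    have e2 : ∀ c : Fin n, ∑ i : Fin s, ∑ i' : Fin s,
        ((s:ℝ)⁻¹)^2 * (if i = i' then ∑ j : κ, w j * (v j c)^2 else 0)
          = (s:ℝ)⁻¹ * ∑ j : κ, w j * (v j c)^2 := by
      intro c
      simp only [mul_ite, mul_zero, Finset.sum_ite_eq, Finset.mem_univ, if_true,
        Finset.sum_const, Finset.card_univ, Fintype.card_fin, nsmul_eq_mul]
      field_simp
    rw [Finset.sum_congr rfl fun c _ => e2 c]
    calc ∑ c, (s:ℝ)⁻¹ * ∑ j : κ, w j * (v j c)^2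
        = (s:ℝ)⁻¹ * ∑ j : κ, w j * ∑ c, (v j c)^2 := by
          rw [← Finset.mul_sum, Finset.sum_comm]
          simp_rw [Finset.mul_sum]
      _ ≤ (s:ℝ)⁻¹ * ∑ j : κ, w j * 1 := by
          gcongr with j hj
          · exact hw0 j
          · exact hvsq j
      _ ≤ (s:ℝ)⁻¹ := by
          simp only [mul_one, hw1]
          simp
  -- there is a sample achieving the mean bound
  have hex : ∃ f : Fin s → κ, q f ≤ (s:ℝ)⁻¹ := by
    by_contra h
    push_neg at h
    obtain ⟨f₀, hf₀⟩ : ∃ f : Fin s → κ, 0 < W f := by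
      by_contra h'
      push_neg at h'
      have hz0 : ∑ f : Fin s → κ, W f = 0 :=
        Finset.sum_eq_zero fun f _ => le_antisymm (h' f) (hW0 f)
      rw [hWsum] at hz0; norm_num at hz0
    have hlt : ∑ f : Fin s → κ, W f * (s:ℝ)⁻¹ < ∑ f : Fin s → κ, W f * q f :=
      Finset.sum_lt_sum (fun f _ => mul_le_mul_of_nonneg_left (h f).le (hW0 f))
        ⟨f₀, Finset.mem_univ f₀, mul_lt_mul_of_pos_left (h f₀) hf₀⟩
    rw [← Finset.sum_mul, hWsum, one_mul] at hlt
    linarith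
  obtain ⟨f, hf⟩ := hex
  refine ⟨fun i => z (f i), fun i => hzT (f i), ?_⟩
  have hl2q : l2 (x - (s:ℝ)⁻¹ • ∑ i, z (f i)) = Real.sqrt (q f) := by
    rw [hq]
    unfold l2
    congr 1
    refine Finset.sum_congr rfl fun c _ => ?_
    congr 1
    simp [Finset.sum_apply]
  rw [hl2q, one_div, ← Real.sqrt_inv]
  exact Real.sqrt_le_sqrt hf
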